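/- arXiv:2008.08244 — 4 statements merged into one kernel-verified Lean document; each statement's English description precedes it below -/
import Mathlib

section
/- Let x_1,…,x_n ∈ ℝ and let π* be a probability measure on ℝ satisfying the first-order condition (1/n) ∑_{i=1}^n φ(x_i − θ)/p_{π*}(x_i) ≤ 1 for all θ ∈ ℝ. Then π* is a global maximizer of the mixture likelihood: ∑_{i=1}^n log p_{π*}(x_i) ≥ ∑_{i=1}^n log p_π(x_i) for every probability measure π on ℝ. -/
open MeasureTheory Set

/-- The standard normal density `φ(x) = (2π)^{-1/2} exp(-x²/2)`. -/
noncomputable def gaussPDF (x : ℝ) : ℝ := (Real.sqrt (2 * Real.pi))⁻¹ * Real.exp (-x ^ 2 / 2)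

/-- Gaussian location mixture density `p_ρ(x) = ∫ φ(x - θ) dρ(θ)`. -/
noncomputable def gmix (ρ : Measure ℝ) (x : ℝ) : ℝ := ∫ θ, gaussPDF (x - θ) ∂ρ

lemma gaussPDF_pos (x : ℝ) : 0 < gaussPDF x := by
  unfold gaussPDF
  positivity

lemma gaussPDF_le (x : ℝ) : gaussPDF x ≤ (Real.sqrt (2 * Real.pi))⁻¹ := by
  unfold gaussPDF
  have h1 : Real.exp (-x ^ 2 / 2) ≤ 1 := by
    rw [Real.exp_le_one_iff]
    nlinarith [sq_nonneg x]
  have h2 : (0:ℝ) < (Real.sqrt (2 * Real.pi))⁻¹ := by positivity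
  nlinarith

lemma measurable_gaussPDF : Measurable gaussPDF := by
  unfold gaussPDF; fun_prop

lemma integrable_gauss (ρ : Measure ℝ) [IsProbabilityMeasure ρ] (a : ℝ) :
    Integrable (fun θ => gaussPDF (a - θ)) ρ := by
  refine ⟨(measurable_gaussPDF.comp (by fun_prop)).aestronglyMeasurable, ?_⟩
  refine HasFiniteIntegral.of_bounded (C := (Real.sqrt (2 * Real.pi))⁻¹) ?_
  filter_upwards with θ
  rw [Real.norm_eq_abs, abs_of_pos (gaussPDF_pos _)]
  exact gaussPDF_le _

lemma gmix_pos (ρ : Measure ℝ) [IsProbabilityMeasure ρ] (a : ℝ) : 0 < gmix ρ a := by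
  unfold gmix
  rw [integral_pos_iff_support_of_nonneg (fun θ => (gaussPDF_pos _).le) (integrable_gauss ρ a)]
  have : Function.support (fun θ => gaussPDF (a - θ)) = univ := by
    ext θ; simp [Function.mem_support, (gaussPDF_pos (a - θ)).ne']
  rw [this]
  simp

/-- The first-order condition is sufficient for global optimality:
if `(1/n) ∑_i φ(x_i - θ)/p_ρs(x_i) ≤ 1` for all `θ`, then `ρs` maximizes the
mixture likelihood over all probability measures. -/
theorem stmt3 (n : ℕ) (hn : 1 ≤ n) (x : Fin n → ℝ) (ρs : Measure ℝ)
    (hρs : IsProbabilityMeasure ρs)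
    (hfoc : ∀ θ : ℝ, (1 / n : ℝ) * ∑ i, gaussPDF (x i - θ) / gmix ρs (x i) ≤ 1) :
    ∀ ρ : Measure ℝ, IsProbabilityMeasure ρ →
      ∑ i, Real.log (gmix ρ (x i)) ≤ ∑ i, Real.log (gmix ρs (x i)) := by
  intro ρ hρ
  have hnpos : (0:ℝ) < n := by exact_mod_cast hn
  have hs : ∀ i, 0 < gmix ρs (x i) := fun i => gmix_pos ρs (x i)
  have hp : ∀ i, 0 < gmix ρ (x i) := fun i => gmix_pos ρ (x i)
  -- FOC rephrased
  have hfoc' : ∀ θ : ℝ, ∑ i, gaussPDF (x i - θ) / gmix ρs (x i) ≤ (n : ℝ) := by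
    intro θ
    have := hfoc θ
    rw [div_mul_eq_mul_div, one_mul, div_le_one hnpos] at this
    exact this
  -- Step B : S ≤ n
  have hinteach : ∀ i : Fin n, Integrable (fun θ => gaussPDF (x i - θ) / gmix ρs (x i)) ρ :=
    fun i => (integrable_gauss ρ (x i)).div_const _
  have hS : ∑ i, gmix ρ (x i) / gmix ρs (x i) ≤ (n : ℝ) := by
    have h1 : ∑ i, gmix ρ (x i) / gmix ρs (x i)
        = ∫ θ, ∑ i, gaussPDF (x i - θ) / gmix ρs (x i) ∂ρ := by
      rw [integral_finset_sum _ (fun i _ => hinteach i)]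
      refine Finset.sum_congr rfl fun i _ => ?_
      rw [integral_div]
      rfl
    rw [h1]
    calc ∫ θ, ∑ i, gaussPDF (x i - θ) / gmix ρs (x i) ∂ρ
        ≤ ∫ _θ, (n : ℝ) ∂ρ := by
          refine integral_mono (integrable_finset_sum _ (fun i _ => hinteach i))
            (integrable_const _) fun θ => hfoc' θ
      _ = (n : ℝ) := by simp
  -- Step A
  have hA : ∀ i : Fin n, Real.log (gmix ρ (x i)) - Real.log (gmix ρs (x i))
      ≤ gmix ρ (x i) / gmix ρs (x i) - 1 := by
    intro i
    have := Real.log_le_sub_one_of_pos (div_pos (hp i) (hs i))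
    rwa [Real.log_div (hp i).ne' (hs i).ne'] at this
  have := Finset.sum_le_sum (fun i (_ : i ∈ Finset.univ) => hA i)
  simp only [Finset.sum_sub_distrib, Finset.sum_const, Finset.card_univ, Fintype.card_fin,
    nsmul_eq_mul, mul_one] at this
  linarith
end

section
/- Let 0 < r < r2 < r1 and let f be a holomorphic function on the open disk {z ∈ ℂ : |z| < r1}, not identically zero, with M_f(r1) = sup_{|z| < r1} |f(z)| < ∞ and M_f(r2) = sup_{|z| < r2} |f(z)|. Then f has finitely many zeros in the closed disk {|z| ≤ r}, and their number n_f(r), counted with multiplicity (the sum over these zeros of the order of vanishing of f), satisfies n_f(r) ≤ log(M_f(r1)/M_f(r2)) / log((r1² + r2·r)/(r1·(r2 + r))). -/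
open Set

open Complex Function Filter Metric

lemma sq_expand (c w : ℂ) (x : ℝ) :
    (‖(x:ℂ) - c * w‖)^2
      = x^2 - 2 * x * (c * w).re + (‖c‖)^2 * (‖w‖)^2 := by
  rw [← Complex.normSq_eq_norm_sq, Complex.normSq_sub]
  simp only [Complex.normSq_ofReal, Complex.normSq_mul, Complex.normSq_eq_norm_sq,
    Complex.re_ofReal_mul, Complex.conj_re]
  rw [norm_mul, Complex.norm_real, Real.norm_eq_abs, _root_.sq_abs, mul_pow]
  ring

lemma sq_expand' (z w : ℂ) :
    (‖w - z‖)^2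
      = (‖w‖)^2 - 2 * ((starRingEnd ℂ) z * w).re + (‖z‖)^2 := by
  rw [← Complex.normSq_eq_norm_sq, Complex.normSq_sub, mul_comm w ((starRingEnd ℂ) z)]
  simp only [Complex.normSq_eq_norm_sq, Complex.mul_re, Complex.conj_re, Complex.conj_im]
  ring

/-- interior Blaschke bound -/
lemma key2 {r r2 r1 : ℝ} (h0 : 0 < r) (hrr2 : r < r2) (hr21 : r2 < r1)
    {z w : ℂ} (hz : ‖z‖ ≤ r) (hw : ‖w‖ ≤ r2) :
    (r1^2 + r2*r) * ‖w - z‖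
      ≤ (r2 + r) * ‖((r1^2:ℝ) : ℂ) - (starRingEnd ℂ) z * w‖ := by
  set a := ‖z‖ with ha
  set s := ‖w‖ with hs
  set t := ((starRingEnd ℂ) z * w).re with ht
  have ha0 : 0 ≤ a := norm_nonneg z
  have hs0 : 0 ≤ s := norm_nonneg w
  have habs0 : 0 ≤ ‖w - z‖ := norm_nonneg _
  have htb : t ≥ -(a*s) := by
    have h1 : |t| ≤ a * s := by
      calc |t| ≤ ‖(starRingEnd ℂ) z * w‖ := Complex.abs_re_le_norm _
      _ = a * s := by rw [norm_mul, Complex.norm_conj]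
    linarith [neg_abs_le t]
  have hsq : ((r1^2 + r2*r) * ‖w - z‖)^2
      ≤ ((r2 + r) * ‖((r1^2:ℝ) : ℂ) - (starRingEnd ℂ) z * w‖)^2 := by
    rw [mul_pow, mul_pow, sq_expand', sq_expand]
    rw [Complex.norm_conj, ← ha, ← hs, ← ht]
    have hlin : (r1^2 + r2*r)*(s+a) ≤ (r2+r)*(r1^2+a*s) := by
      nlinarith [mul_nonneg (by linarith : (0:ℝ) ≤ r2 - s) (by nlinarith : (0:ℝ) ≤ r1^2 - r*a),
        mul_nonneg (by linarith : (0:ℝ) ≤ r - a) (by nlinarith : (0:ℝ) ≤ r1^2 - r2*s)]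
    have hlin0 : 0 ≤ (r1^2 + r2*r)*(s+a) := by
      apply mul_nonneg (by nlinarith) (by linarith)
    have hsq2 : ((r1^2 + r2*r)*(s+a))^2 ≤ ((r2+r)*(r1^2+a*s))^2 :=
      pow_le_pow_left₀ hlin0 hlin 2
    have hcoef : r1^2*(r2+r)^2 ≤ (r1^2+r2*r)^2 := by
      nlinarith [mul_nonneg (mul_nonneg (by linarith : (0:ℝ) ≤ r1 - r2) (by linarith : (0:ℝ) ≤ r1 - r))
        (by nlinarith : (0:ℝ) ≤ r1^2 + r2*r + r1*(r2+r))]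
    nlinarith [mul_nonneg (by linarith : (0:ℝ) ≤ t + a*s)
      (by linarith : (0:ℝ) ≤ (r1^2+r2*r)^2 - r1^2*(r2+r)^2)]
  have h2 : 0 ≤ (r2 + r) * ‖((r1^2:ℝ):ℂ) - (starRingEnd ℂ) z * w‖ :=
    mul_nonneg (by linarith) (norm_nonneg _)
  have h3 : 0 ≤ (r1^2 + r2*r) * ‖w - z‖ := by
    apply mul_nonneg (by nlinarith) habs0
  nlinarith [hsq, h2, h3]

/-- boundary bound -/
lemma key1 {r r1 ρ : ℝ} (h0 : 0 < r) (hrρ : r < ρ) (hρ1 : ρ < r1)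
    {z ζ : ℂ} (hz : ‖z‖ ≤ r) (hζ : ‖ζ‖ = ρ) :
    (ρ - r) * ‖((r1^2:ℝ) : ℂ) - (starRingEnd ℂ) z * ζ‖
      ≤ (r1^2 - r*ρ) * ‖ζ - z‖ := by
  set a := ‖z‖ with ha
  have ha0 : 0 ≤ a := norm_nonneg z
  set t := ((starRingEnd ℂ) z * ζ).re with ht
  have habs0 : 0 ≤ ‖ζ - z‖ := norm_nonneg _
  have htb : t ≤ a*ρ := by
    have h1 : |t| ≤ a * ρ := by
      calc |t| ≤ ‖(starRingEnd ℂ) z * ζ‖ := Complex.abs_re_le_norm _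
      _ = a * ρ := by rw [norm_mul, Complex.norm_conj, hζ]
    linarith [le_abs_self t]
  have hsq : ((ρ - r) * ‖((r1^2:ℝ) : ℂ) - (starRingEnd ℂ) z * ζ‖)^2
      ≤ ((r1^2 - r*ρ) * ‖ζ - z‖)^2 := by
    rw [mul_pow, mul_pow, sq_expand, sq_expand']
    rw [Complex.norm_conj, ← ha, ← ht, hζ]
    have hlin : (ρ - r)*(r1^2 - a*ρ) ≤ (r1^2 - r*ρ)*(ρ - a) := by
      nlinarith [mul_nonneg (by linarith : (0:ℝ) ≤ r - a) (by nlinarith : (0:ℝ) ≤ r1^2 - ρ^2)]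
    have hlin0 : 0 ≤ (ρ - r)*(r1^2 - a*ρ) := by
      apply mul_nonneg (by linarith) (by nlinarith)
    have hsq2 : ((ρ - r)*(r1^2 - a*ρ))^2 ≤ ((r1^2 - r*ρ)*(ρ - a))^2 :=
      pow_le_pow_left₀ hlin0 hlin 2
    have hcoef : r1^2*(ρ - r)^2 ≤ (r1^2 - r*ρ)^2 := by
      nlinarith [mul_nonneg (mul_nonneg (by linarith : (0:ℝ) ≤ r1 - ρ) (by linarith : (0:ℝ) ≤ r1 + r))
        (by nlinarith : (0:ℝ) ≤ (r1+ρ)*(r1-r))]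
    nlinarith [mul_nonneg (by linarith : (0:ℝ) ≤ a*ρ - t)
      (by linarith : (0:ℝ) ≤ (r1^2 - r*ρ)^2 - r1^2*(ρ - r)^2)]
  have h2 : 0 ≤ (r1^2 - r*ρ) * ‖ζ - z‖ := by
    apply mul_nonneg (by nlinarith) habs0
  have h3 : 0 ≤ (ρ - r) * ‖((r1^2:ℝ):ℂ) - (starRingEnd ℂ) z * ζ‖ := by
    apply mul_nonneg (by linarith) (norm_nonneg _)
  nlinarith [hsq, h2, h3]



lemma aux_fact {r1 : ℝ} (S : Finset ℂ) (hS : ∀ z ∈ S, z ∈ Metric.ball (0:ℂ) r1) :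
    ∀ (n : ℕ) (F : ℂ → ℂ), DifferentiableOn ℂ F (Metric.ball 0 r1) →
    ∀ (m : ℂ → ℕ), (∑ z ∈ S, m z) = n →
    (∀ z ∈ S, ∃ g : ℂ → ℂ, AnalyticAt ℂ g z ∧ ∀ᶠ w in nhds z, F w = (w - z) ^ (m z) * g w) →
    ∃ G : ℂ → ℂ, DifferentiableOn ℂ G (Metric.ball 0 r1) ∧
      ∀ w : ℂ, F w = (∏ z ∈ S, (w - z) ^ (m z)) * G w := by
  intro n
  induction n with
  | zero =>
    intro F hF m hsum _
    refine ⟨F, hF, fun w => ?_⟩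
    have hm : ∀ z ∈ S, m z = 0 := fun z hz => by
      by_contra h
      exact h (Finset.sum_eq_zero_iff.mp hsum z hz)
    rw [Finset.prod_congr rfl (fun z hz => by rw [hm z hz, pow_zero]), Finset.prod_const_one,
      one_mul]
  | succ n ih =>
    intro F hF m hsum hord
    have hex : ∃ z0 ∈ S, m z0 ≠ 0 := by
      by_contra hc
      push_neg at hc
      rw [Finset.sum_eq_zero hc] at hsum
      exact Nat.succ_ne_zero n hsum.symm
    obtain ⟨z0, hz0S, hm0⟩ := hex
    obtain ⟨k0, hk0⟩ := Nat.exists_eq_succ_of_ne_zero hm0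
    obtain ⟨g0, hg0, hev0⟩ := hord z0 hz0S
    have hF0 : F z0 = 0 := by
      have h := hev0.self_of_nhds
      rw [h, sub_self, zero_pow hm0, zero_mul]
    set F₁ := dslope F z0 with hF₁
    have hF₁diff : DifferentiableOn ℂ F₁ (Metric.ball 0 r1) :=
      (Complex.differentiableOn_dslope (Metric.isOpen_ball.mem_nhds (hS z0 hz0S))).mpr hF
    have hglob : ∀ w : ℂ, F w = (w - z0) * F₁ w := by
      intro w
      have h := sub_smul_dslope F z0 w
      rw [smul_eq_mul, hF0, sub_zero] at h
      rw [← h, hF₁]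
    set m' := Function.update m z0 k0 with hm'
    have hsum' : (∑ z ∈ S, m' z) = n := by
      rw [hm', Finset.sum_update_of_mem hz0S]
      rw [← Finset.add_sum_erase S m hz0S, Finset.erase_eq] at hsum
      omega
    have hord' : ∀ z ∈ S, ∃ g : ℂ → ℂ, AnalyticAt ℂ g z ∧
        ∀ᶠ w in nhds z, F₁ w = (w - z) ^ (m' z) * g w := by
      intro z hzS
      by_cases hzz0 : z = z0
      · subst hzz0
        refine ⟨g0, hg0, ?_⟩
        have hmz : m' z = k0 := by rw [hm', Function.update_self]
        rw [hmz]
        rw [← nhdsNE_sup_pure, Filter.eventually_sup]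
        constructor
        · filter_upwards [hev0.filter_mono nhdsWithin_le_nhds, self_mem_nhdsWithin]
            with w hw hwne
          have hwz : w - z ≠ 0 := sub_ne_zero.mpr hwne
          rw [hF₁, dslope_of_ne F hwne, slope_def_field, hF0, sub_zero, hw, hk0, pow_succ]
          field_simp
        · rw [Filter.eventually_pure]
          have hd : deriv F z = deriv (fun w => (w - z) ^ (m z) * g0 w) z :=
            Filter.EventuallyEq.deriv_eq hev0
          have hpow : HasDerivAt (fun w : ℂ => (w - z) ^ (m z))
              ((m z : ℂ) * (z - z) ^ (m z - 1) * 1) z :=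
            ((hasDerivAt_id z).sub_const z).pow (m z)
          have hgd : HasDerivAt g0 (deriv g0 z) z := hg0.differentiableAt.hasDerivAt
          have hmul : HasDerivAt (fun w => (w - z) ^ (m z) * g0 w) _ z := hpow.mul hgd
          rw [hF₁, dslope_same, hd, hmul.deriv, sub_self]
          rcases k0 with _ | k'
          · rw [hk0]; norm_num
          · rw [hk0]; simp [zero_pow]
      · obtain ⟨g, hg, hev⟩ := hord z hzS
        have hz0ne : (fun w : ℂ => w - z0) z ≠ 0 := sub_ne_zero.mpr hzz0
        refine ⟨fun w => g w * (w - z0)⁻¹,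
          hg.mul (((analyticAt_id).sub analyticAt_const).inv hz0ne), ?_⟩
        have hmz : m' z = m z := by rw [hm', Function.update_of_ne hzz0]
        rw [hmz]
        filter_upwards [hev, eventually_ne_nhds hzz0] with w hw hwne
        rw [hF₁, dslope_of_ne F hwne, slope_def_field, hF0, sub_zero, hw]
        ring
    obtain ⟨G, hGdiff, hGfact⟩ := ih F₁ hF₁diff m' hsum' hord'
    refine ⟨G, hGdiff, fun w => ?_⟩
    have hsplit : (∏ z ∈ S, (w - z) ^ (m z))
        = (w - z0) * ∏ z ∈ S, (w - z) ^ (m' z) := by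
      rw [← Finset.mul_prod_erase S _ hz0S,
        ← Finset.mul_prod_erase S (fun z => (w - z) ^ (m' z)) hz0S]
      have h1 : ∏ z ∈ S.erase z0, (w - z) ^ (m' z) = ∏ z ∈ S.erase z0, (w - z) ^ (m z) :=
        Finset.prod_congr rfl fun z hz => by
          rw [hm', Function.update_of_ne (Finset.ne_of_mem_erase hz)]
      rw [h1, hm', Function.update_self, hk0, pow_succ']
      ring
    rw [hglob w, hGfact w, hsplit]
    ring


/-- Order of vanishing of `f` at `z`: the smallest `k` such that the `k`-th
Taylor coefficient (equivalently, the `k`-th iterated derivative) of `f` at `z`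
is nonzero. -/
noncomputable def vanishOrder (f : ℂ → ℂ) (z : ℂ) : ℕ :=
  sInf {k : ℕ | iteratedDeriv k f z ≠ 0}

lemma vanishOrder_eq_order {f : ℂ → ℂ} {z : ℂ} {p : FormalMultilinearSeries ℂ ℂ ℂ}
    (hp : HasFPowerSeriesAt f p z) : vanishOrder f z = p.order := by
  have hiter : ∀ k : ℕ, iteratedDeriv k f z = ((Nat.factorial k : ℕ) : ℂ) * p.coeff k := by
    intro k
    obtain ⟨R, hR⟩ := hp
    have h1 := hR.factorial_smul (1 : ℂ) k
    rw [iteratedDeriv_eq_iteratedFDeriv, ← h1, FormalMultilinearSeries.coeff]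
    rw [nsmul_eq_mul]
    rfl
  unfold vanishOrder FormalMultilinearSeries.order
  congr 1
  ext k
  simp only [mem_setOf_eq, hiter]
  rw [mul_ne_zero_iff]
  constructor
  · rintro ⟨-, h⟩
    exact fun hk => h (by rw [← FormalMultilinearSeries.coeff_eq_zero] at hk; exact hk)
  · intro h
    refine ⟨Nat.cast_ne_zero.mpr (Nat.factorial_ne_zero k), ?_⟩
    rw [Ne, FormalMultilinearSeries.coeff_eq_zero]
    exact h

/-- Zero-counting bound: if `f` is holomorphic and bounded on the
open disk of radius `r1`, not identically zero, with `M_f(ρ)` denoting the sup of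
`|f|` on the open disk of radius `ρ`, then for `0 < r < r2 < r1` the number of
zeros of `f` in the closed disk of radius `r`, counted with multiplicity,
is at most `log(M_f(r1)/M_f(r2)) / log((r1² + r2·r)/(r1·(r2 + r)))`. -/
theorem stmt8 (r r2 r1 : ℝ) (h0 : 0 < r) (hrr2 : r < r2) (hr21 : r2 < r1)
    (f : ℂ → ℂ) (hf : DifferentiableOn ℂ f (Metric.ball 0 r1))
    (hnz : ∃ z ∈ Metric.ball (0 : ℂ) r1, f z ≠ 0)
    (M1 M2 : ℝ)
    (hM1 : IsLUB ((fun z => ‖f z‖) '' Metric.ball (0 : ℂ) r1) M1)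
    (hM2 : IsLUB ((fun z => ‖f z‖) '' Metric.ball (0 : ℂ) r2) M2) :
    ∃ hfin : {z ∈ Metric.closedBall (0 : ℂ) r | f z = 0}.Finite,
      ((∑ z ∈ hfin.toFinset, vanishOrder f z : ℕ) : ℝ) ≤
        Real.log (M1 / M2) / Real.log ((r1 ^ 2 + r2 * r) / (r1 * (r2 + r))) := by
  have hr2pos : 0 < r2 := h0.trans hrr2
  have hr1pos : 0 < r1 := hr2pos.trans hr21
  have hrr1 : r < r1 := hrr2.trans hr21
  have hfa : AnalyticOnNhd ℂ f (Metric.ball 0 r1) := hf.analyticOnNhd Metric.isOpen_ball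
  have hconn : IsPreconnected (Metric.ball (0:ℂ) r1) := (convex_ball (0:ℂ) r1).isPreconnected
  have hsub : Metric.closedBall (0:ℂ) r ⊆ Metric.ball (0:ℂ) r1 :=
    Metric.closedBall_subset_ball hrr1
  -- f does not vanish frequently near any point of the ball
  have hfreq : ∀ z0 ∈ Metric.ball (0:ℂ) r1, ¬ (∃ᶠ w in nhdsWithin z0 {z0}ᶜ, f w = 0) := by
    intro z0 hz0 hfr
    obtain ⟨w, hw, hfw⟩ := hnz
    exact hfw (by
      have := hfa.eqOn_zero_of_preconnected_of_frequently_eq_zero hconn hz0 hfr hw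
      simpa using this)
  -- finiteness of the zero set
  have hfin : {z ∈ Metric.closedBall (0 : ℂ) r | f z = 0}.Finite := by
    by_contra hinf
    obtain ⟨x, hxK, hx⟩ := Set.Infinite.exists_accPt_of_subset_isCompact hinf
      (isCompact_closedBall (0:ℂ) r) (fun y hy => hy.1)
    apply hfreq x (hsub hxK)
    rw [accPt_iff_frequently] at hx
    rw [frequently_nhdsWithin_iff]
    exact hx.mono (fun y hy => ⟨hy.2.2, hy.1⟩)
  refine ⟨hfin, ?_⟩
  classical
  set Sf := hfin.toFinset with hSf
  set m : ℂ → ℕ := fun z => vanishOrder f z with hm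
  have hmem : ∀ z ∈ Sf, ‖z‖ ≤ r ∧ f z = 0 := by
    intro z hz
    rw [hSf, Set.Finite.mem_toFinset] at hz
    refine ⟨?_, hz.2⟩
    have := hz.1
    rwa [Metric.mem_closedBall, dist_zero_right] at this
  have hSsub : ∀ z ∈ Sf, z ∈ Metric.ball (0:ℂ) r1 := by
    intro z hz
    rw [Metric.mem_ball, dist_zero_right]
    exact lt_of_le_of_lt (hmem z hz).1 hrr1
  -- order factorization data
  have hord : ∀ z ∈ Sf, ∃ g : ℂ → ℂ, AnalyticAt ℂ g z ∧
      ∀ᶠ w in nhds z, f w = (w - z) ^ (m z) * g w := by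
    intro z hz
    obtain ⟨p, hp⟩ := hfa z (hSsub z hz)
    refine ⟨(Function.swap dslope z)^[p.order] f,
      ⟨_, hp.has_fpower_series_iterate_dslope_fslope p.order⟩, ?_⟩
    rw [show m z = p.order from vanishOrder_eq_order hp]
    filter_upwards with w
    rw [hp.eq_pow_order_mul_iterate_dslope w, smul_eq_mul]
  obtain ⟨G, hGdiff, hfact⟩ := aux_fact Sf hSsub (∑ z ∈ Sf, m z) f hf m rfl hord
  set N := ∑ z ∈ Sf, m z with hN
  set P : ℂ → ℂ := fun w => ∏ z ∈ Sf, (w - z) ^ (m z) with hP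
  set A : ℂ → ℂ := fun w => ∏ z ∈ Sf, (((((r1^2:ℝ)):ℂ) - (starRingEnd ℂ) z * w) / (r1:ℂ)) ^ (m z)
    with hA
  set h : ℂ → ℂ := fun w => G w * A w with hh
  have hAdiff : Differentiable ℂ A := by
    rw [hA]
    have : ∀ (s : Finset ℂ), Differentiable ℂ
        (fun w => ∏ z ∈ s, (((((r1^2:ℝ)):ℂ) - (starRingEnd ℂ) z * w) / (r1:ℂ)) ^ (m z)) := by
      intro s
      induction s using Finset.induction_on with
      | empty => simpa using differentiable_const (1:ℂ)
      | @insert a s ha ih =>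
        have heq : (fun w : ℂ => ∏ z ∈ insert a s,
              (((((r1^2:ℝ)):ℂ) - (starRingEnd ℂ) z * w) / (r1:ℂ)) ^ (m z))
            = fun w : ℂ => (((((r1^2:ℝ)):ℂ) - (starRingEnd ℂ) a * w) / (r1:ℂ)) ^ (m a) *
              ∏ z ∈ s, (((((r1^2:ℝ)):ℂ) - (starRingEnd ℂ) z * w) / (r1:ℂ)) ^ (m z) :=
          funext fun w => Finset.prod_insert ha
        rw [heq]
        exact ((((differentiable_const _).sub
          ((differentiable_id).const_mul _)).div_const _).pow _).mul ih
    exact this Sf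
  have hhdiff : DifferentiableOn ℂ h (Metric.ball (0:ℂ) r1) :=
    hGdiff.mul hAdiff.differentiableOn
  have habsf : ∀ w : ℂ, ‖f w‖ = ‖P w‖ * ‖G w‖ := by
    intro w
    rw [hfact w, norm_mul]
  have habsh : ∀ w : ℂ, ‖h w‖ = ‖G w‖ * ‖A w‖ := by
    intro w
    rw [hh, norm_mul]
  have habsP : ∀ w : ℂ, ‖P w‖ = ∏ z ∈ Sf, (‖w - z‖) ^ (m z) := by
    intro w
    rw [hP]
    rw [norm_prod]
    exact Finset.prod_congr rfl fun z _ => by rw [norm_pow]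
  have habsA : ∀ w : ℂ, ‖A w‖
      = ∏ z ∈ Sf, (‖(((r1^2:ℝ)):ℂ) - (starRingEnd ℂ) z * w‖ / r1) ^ (m z) := by
    intro w
    rw [hA, norm_prod]
    refine Finset.prod_congr rfl fun z _ => ?_
    rw [norm_pow, norm_div, Complex.norm_real, Real.norm_eq_abs, abs_of_pos hr1pos]
  -- STEP: |h| ≤ M1 on the ball
  have hhle : ∀ w ∈ Metric.ball (0:ℂ) r1, ‖h w‖ ≤ M1 := by
    intro w hw
    have hwabs : ‖w‖ < r1 := by rwa [Metric.mem_ball, dist_zero_right] at hw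
    set c := max (‖w‖) r with hc
    have hc1 : c < r1 := max_lt hwabs hrr1
    have hden : r1 * (r1 - r) ≠ 0 := ne_of_gt (by nlinarith)
    have hbnd : ∀ ρ ∈ Ioo c r1,
        ‖h w‖ ≤ M1 * ((r1^2 - r*ρ)/(r1*(ρ-r)))^N := by
      intro ρ hρ
      obtain ⟨hcρ, hρ1⟩ := hρ
      have hrρ : r < ρ := lt_of_le_of_lt (le_max_right _ _) hcρ
      have hwρ : ‖w‖ < ρ := lt_of_le_of_lt (le_max_left _ _) hcρ
      have hρ0 : 0 < ρ := h0.trans hrρ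
      have hu0 : 0 ≤ (r1^2 - r*ρ)/(r1*(ρ-r)) := by
        apply div_nonneg (by nlinarith) (by nlinarith)
      have hdcl : DiffContOnCl ℂ h (Metric.ball (0:ℂ) ρ) := by
        apply DifferentiableOn.diffContOnCl
        rw [closure_ball (0:ℂ) (ne_of_gt hρ0)]
        exact hhdiff.mono (Metric.closedBall_subset_ball hρ1)
      have key : ∀ ζ ∈ frontier (Metric.ball (0:ℂ) ρ),
          ‖h ζ‖ ≤ M1 * ((r1^2 - r*ρ)/(r1*(ρ-r)))^N := by
        intro ζ hζf
        rw [frontier_ball (0:ℂ) (ne_of_gt hρ0)] at hζf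
        have hζ : ‖ζ‖ = ρ := by
          have := mem_sphere_zero_iff_norm.mp hζf
          exact this
        have hζU : ζ ∈ Metric.ball (0:ℂ) r1 := by
          rw [Metric.mem_ball, dist_zero_right, hζ]; exact hρ1
        have hfM1 : ‖f ζ‖ ≤ M1 := hM1.1 ⟨ζ, hζU, rfl⟩
        have hAb : ‖A ζ‖
            ≤ ((r1^2 - r*ρ)/(r1*(ρ-r)))^N * ‖P ζ‖ := by
          rw [habsA, habsP, ← Finset.prod_pow_eq_pow_sum, ← Finset.prod_mul_distrib]
          apply Finset.prod_le_prod
          · intro z _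
            apply pow_nonneg (div_nonneg (norm_nonneg _) hr1pos.le)
          · intro z hz
            rw [← mul_pow]
            apply pow_le_pow_left₀ (div_nonneg (norm_nonneg _) hr1pos.le)
            have hk := key1 h0 hrρ hρ1 (hmem z hz).1 hζ
            rw [div_le_iff₀ hr1pos]
            have h2 : (r1^2 - r*ρ)/(r1*(ρ-r)) * ‖ζ - z‖ * r1
                = ((r1^2 - r*ρ) * ‖ζ - z‖)/(ρ-r) := by
              have hne1 : ρ - r ≠ 0 := ne_of_gt (by linarith)
              have hne2 : r1 ≠ 0 := ne_of_gt hr1pos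
              field_simp
            rw [h2, le_div_iff₀ (by linarith : (0:ℝ) < ρ - r)]
            linarith [hk]
        calc ‖h ζ‖ = ‖G ζ‖ * ‖A ζ‖ := habsh ζ
          _ ≤ ‖G ζ‖ * (((r1^2 - r*ρ)/(r1*(ρ-r)))^N * ‖P ζ‖) :=
            mul_le_mul_of_nonneg_left hAb (norm_nonneg _)
          _ = ((r1^2 - r*ρ)/(r1*(ρ-r)))^N * (‖P ζ‖ * ‖G ζ‖) := by ring
          _ = ((r1^2 - r*ρ)/(r1*(ρ-r)))^N * ‖f ζ‖ := by rw [habsf]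
          _ ≤ ((r1^2 - r*ρ)/(r1*(ρ-r)))^N * M1 :=
            mul_le_mul_of_nonneg_left hfM1 (pow_nonneg hu0 N)
          _ = M1 * ((r1^2 - r*ρ)/(r1*(ρ-r)))^N := mul_comm _ _
      have := Complex.norm_le_of_forall_mem_frontier_norm_le Metric.isBounded_ball hdcl key
        (subset_closure (by rw [Metric.mem_ball, dist_zero_right]; exact hwρ))
      exact this
    -- limit as ρ → r1⁻
    have htend : Tendsto (fun ρ : ℝ => M1 * ((r1^2 - r*ρ)/(r1*(ρ-r)))^N)
        (nhdsWithin r1 (Iio r1)) (nhds (M1 * ((r1^2 - r*r1)/(r1*(r1-r)))^N)) := by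
      have hcont : ContinuousAt (fun ρ : ℝ => M1 * ((r1^2 - r*ρ)/(r1*(ρ-r)))^N) r1 := by
        apply ContinuousAt.mul continuousAt_const
        apply ContinuousAt.pow
        apply ContinuousAt.div (by fun_prop) (by fun_prop)
        simpa using hden
      exact hcont.tendsto.mono_left nhdsWithin_le_nhds
    have hval : M1 * ((r1^2 - r*r1)/(r1*(r1-r)))^N = M1 := by
      rw [show r1^2 - r*r1 = r1*(r1-r) by ring, div_self hden, one_pow, mul_one]
    rw [← hval]
    exact ge_of_tendsto htend
      (Filter.eventually_of_mem (Ioo_mem_nhdsLT_of_mem ⟨hc1, le_refl r1⟩) hbnd)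
  -- STEP : interior bound |f w| ≤ M1 * q^N on ball r2
  set q : ℝ := r1*(r2+r)/(r1^2+r2*r) with hq
  have hq0 : 0 ≤ q := by
    apply div_nonneg (by nlinarith) (by nlinarith)
  have hfq : ∀ w ∈ Metric.ball (0:ℂ) r2, ‖f w‖ ≤ M1 * q^N := by
    intro w hw
    have hwabs : ‖w‖ < r2 := by rwa [Metric.mem_ball, dist_zero_right] at hw
    have hwU : w ∈ Metric.ball (0:ℂ) r1 := by
      rw [Metric.mem_ball, dist_zero_right]
      exact hwabs.trans hr21
    have hPb : ‖P w‖ ≤ q^N * ‖A w‖ := by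
      rw [habsA, habsP, ← Finset.prod_pow_eq_pow_sum, ← Finset.prod_mul_distrib]
      apply Finset.prod_le_prod
      · intro z _
        exact pow_nonneg (norm_nonneg _) _
      · intro z hz
        rw [← mul_pow]
        apply pow_le_pow_left₀ (norm_nonneg _)
        have hk := key2 h0 hrr2 hr21 (hmem z hz).1 hwabs.le
        have h2 : q * (‖(((r1^2:ℝ)):ℂ) - (starRingEnd ℂ) z * w‖ / r1)
            = (r2+r) * ‖(((r1^2:ℝ)):ℂ) - (starRingEnd ℂ) z * w‖ / (r1^2+r2*r) := by
          rw [hq]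
          field_simp
        rw [h2, le_div_iff₀ (by nlinarith : (0:ℝ) < r1^2+r2*r)]
        linarith [hk]
    calc ‖f w‖ = ‖P w‖ * ‖G w‖ := habsf w
      _ ≤ (q^N * ‖A w‖) * ‖G w‖ :=
        mul_le_mul_of_nonneg_right hPb (norm_nonneg _)
      _ = q^N * ‖h w‖ := by rw [habsh]; ring
      _ ≤ q^N * M1 := mul_le_mul_of_nonneg_left (hhle w hwU) (pow_nonneg hq0 N)
      _ = M1 * q^N := mul_comm _ _
  -- M2 bounds
  have hM2q : M2 ≤ M1 * q^N := by
    apply hM2.2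
    rintro y ⟨w, hw, rfl⟩
    exact hfq w hw
  have hM2pos : 0 < M2 := by
    have hw2 : ∃ w ∈ Metric.ball (0:ℂ) r2, f w ≠ 0 := by
      by_contra hc
      push_neg at hc
      apply hfreq 0 (Metric.mem_ball_self hr1pos)
      have hball : Metric.ball (0:ℂ) r2 ∈ nhds (0:ℂ) :=
        Metric.isOpen_ball.mem_nhds (Metric.mem_ball_self hr2pos)
      have hev : ∀ᶠ w in nhds (0:ℂ), f w = 0 := Filter.eventually_of_mem hball hc
      exact (hev.filter_mono nhdsWithin_le_nhds).frequently
    obtain ⟨w2, hw2b, hw2ne⟩ := hw2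
    exact lt_of_lt_of_le (norm_pos_iff.mpr hw2ne) (hM2.1 ⟨w2, hw2b, rfl⟩)
  -- final arithmetic
  set Q : ℝ := (r1 ^ 2 + r2 * r) / (r1 * (r2 + r)) with hQ
  have hQden : 0 < r1 * (r2 + r) := by nlinarith
  have hQ1 : 1 < Q := by
    rw [hQ, lt_div_iff₀ hQden]
    nlinarith [mul_pos (sub_pos.mpr hr21) (sub_pos.mpr hrr1)]
  have hQ0 : 0 < Q := lt_trans one_pos hQ1
  have hlogQ : 0 < Real.log Q := Real.log_pos hQ1
  have hQq : Q * q = 1 := by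
    rw [hQ, hq]
    field_simp
  have hQM : Q^N ≤ M1 / M2 := by
    rw [le_div_iff₀ hM2pos]
    calc Q^N * M2 ≤ Q^N * (M1 * q^N) :=
        mul_le_mul_of_nonneg_left hM2q (pow_nonneg hQ0.le N)
      _ = M1 * (Q*q)^N := by rw [mul_pow]; ring
      _ = M1 := by rw [hQq, one_pow, mul_one]
  rw [le_div_iff₀ hlogQ, ← Real.log_pow]
  exact Real.log_le_log (pow_pos hQ0 N) hQM
end

section
/- Let f be a bounded holomorphic function on the open unit disk of ℂ, not identically zero, and let M_f(ρ) = sup_{|z| < ρ} |f(z)|. Fix 0 < r < r2 < 1 and let n be the number of zeros of f in the closed disk {|z| ≤ r}, counted with multiplicity. Then M_f(r2) ≤ M_f(1) · ((r2 + r)/(1 + r2·r))^n. -/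
open Set

private lemma le_of_sq_le_sq'' {a b : ℝ} (ha : 0 ≤ a) (hb : 0 ≤ b) (h : a ^ 2 ≤ b ^ 2) :
    a ≤ b := by nlinarith

private lemma one_sub_conj_ne {a w : ℂ} (h : ‖a‖ * ‖w‖ < 1) :
    (1 : ℂ) - (starRingEnd ℂ) a * w ≠ 0 := by
  intro h0
  have h1 : (starRingEnd ℂ) a * w = 1 := by
    have := sub_eq_zero.mp h0
    exact this.symm
  have h2 : ‖(starRingEnd ℂ) a * w‖ = 1 := by rw [h1, norm_one]
  rw [norm_mul, Complex.norm_conj] at h2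
  linarith

private lemma cabs_sub_sq (a z : ℂ) :
    ‖z - a‖ ^ 2 =
      ‖z‖ ^ 2 - 2 * ((starRingEnd ℂ) a * z).re + ‖a‖ ^ 2 := by
  rw [Complex.sq_norm, Complex.sq_norm, Complex.sq_norm, Complex.normSq_sub]
  have : (z * (starRingEnd ℂ) a).re = ((starRingEnd ℂ) a * z).re := by rw [mul_comm]
  rw [this]; ring

private lemma cabs_one_sub_sq (a z : ℂ) :
    ‖1 - (starRingEnd ℂ) a * z‖ ^ 2 =
      1 - 2 * ((starRingEnd ℂ) a * z).re + ‖a‖ ^ 2 * ‖z‖ ^ 2 := by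
  rw [Complex.sq_norm, Complex.normSq_sub]
  have h1 : Complex.normSq 1 = 1 := by simp
  have h2 : Complex.normSq ((starRingEnd ℂ) a * z) =
      ‖a‖ ^ 2 * ‖z‖ ^ 2 := by
    rw [Complex.normSq_mul, ← Complex.sq_norm, ← Complex.sq_norm, Complex.norm_conj]
  have h3 : ((1 : ℂ) * (starRingEnd ℂ) ((starRingEnd ℂ) a * z)).re =
      ((starRingEnd ℂ) a * z).re := by
    rw [one_mul, Complex.conj_re]
  rw [h1, h2, h3]; ring

private lemma re_conj_le (a z : ℂ) :
    ((starRingEnd ℂ) a * z).re ≤ ‖a‖ * ‖z‖ := by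
  calc ((starRingEnd ℂ) a * z).re ≤ ‖(starRingEnd ℂ) a * z‖ := Complex.re_le_norm _
  _ = ‖a‖ * ‖z‖ := by rw [norm_mul, Complex.norm_conj]

private lemma neg_re_conj_le (a z : ℂ) :
    -(‖a‖ * ‖z‖) ≤ ((starRingEnd ℂ) a * z).re := by
  have h := Complex.abs_re_le_norm ((starRingEnd ℂ) a * z)
  rw [norm_mul, Complex.norm_conj] at h
  cases abs_le.mp h with
  | intro h1 h2 => exact h1

/-- On the sphere of radius `ρ`, the Blaschke denominator dominates:
`(ρ - |a|)·|1 - ā w| ≤ (1 - ρ|a|)·|w - a|`. -/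
private lemma sphere_ineq {a w : ℂ} {ρ : ℝ} (hw : ‖w‖ = ρ)
    (hs : ‖a‖ < ρ) (hρ : ρ < 1) :
    (ρ - ‖a‖) * ‖1 - (starRingEnd ℂ) a * w‖ ≤
      (1 - ρ * ‖a‖) * ‖w - a‖ := by
  set s := ‖a‖ with hsdef
  set t := ((starRingEnd ℂ) a * w).re with htdef
  have hs0 : 0 ≤ s := norm_nonneg a
  have hρ0 : 0 < ρ := lt_of_le_of_lt hs0 hs
  have hX2 : ‖w - a‖ ^ 2 = ρ ^ 2 - 2 * t + s ^ 2 := by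
    rw [cabs_sub_sq, hw]
  have hY2 : ‖1 - (starRingEnd ℂ) a * w‖ ^ 2 = 1 - 2 * t + s ^ 2 * ρ ^ 2 := by
    rw [cabs_one_sub_sq, hw]
  have ht : t ≤ s * ρ := by
    have := re_conj_le a w; rw [hw] at this; exact this
  have hX0 : 0 ≤ ‖w - a‖ := norm_nonneg _
  have hY0 : 0 ≤ ‖1 - (starRingEnd ℂ) a * w‖ := norm_nonneg _
  apply le_of_sq_le_sq'' (mul_nonneg (by linarith) hY0) (mul_nonneg (by nlinarith) hX0)
  have key : ((1 - ρ * s) * ‖w - a‖) ^ 2 -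
      ((ρ - s) * ‖1 - (starRingEnd ℂ) a * w‖) ^ 2 =
      2 * (1 - ρ ^ 2) * (1 - s ^ 2) * (s * ρ - t) := by
    rw [mul_pow, mul_pow, hX2, hY2]; ring
  have hnn : (0:ℝ) ≤ 2 * (1 - ρ ^ 2) * (1 - s ^ 2) * (s * ρ - t) :=
    mul_nonneg (mul_nonneg (by nlinarith) (by nlinarith)) (by linarith)
  linarith [key, hnn]

/-- The Blaschke factor bound for `|a| ≤ r`, `|z| ≤ r2`. -/
private lemma blaschke_ineq {a z : ℂ} {r r2 : ℝ} (h0 : 0 ≤ r) (hrr2 : r < r2) (hr21 : r2 < 1)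
    (ha : ‖a‖ ≤ r) (hz : ‖z‖ ≤ r2) :
    ‖z - a‖ * (1 + r2 * r) ≤
      (r2 + r) * ‖1 - (starRingEnd ℂ) a * z‖ := by
  set s := ‖a‖ with hsdef
  set ρ := ‖z‖ with hρdef
  set t := ((starRingEnd ℂ) a * z).re with htdef
  have hs0 : 0 ≤ s := norm_nonneg a
  have hρ0 : 0 ≤ ρ := norm_nonneg z
  have hX2 : ‖z - a‖ ^ 2 = ρ ^ 2 - 2 * t + s ^ 2 := cabs_sub_sq a z
  have hY2 : ‖1 - (starRingEnd ℂ) a * z‖ ^ 2 = 1 - 2 * t + s ^ 2 * ρ ^ 2 :=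
    cabs_one_sub_sq a z
  have ht : -(s * ρ) ≤ t := neg_re_conj_le a z
  have hX0 : 0 ≤ ‖z - a‖ := norm_nonneg _
  have hY0 : 0 ≤ ‖1 - (starRingEnd ℂ) a * z‖ := norm_nonneg _
  have hs1 : s < 1 := lt_of_le_of_lt ha (lt_trans hrr2 hr21)
  have hρ1 : ρ < 1 := lt_of_le_of_lt hz hr21
  -- step 1 : X * (1 + ρ s) ≤ (ρ + s) * Y
  have step1 : ‖z - a‖ * (1 + ρ * s) ≤
      (ρ + s) * ‖1 - (starRingEnd ℂ) a * z‖ := by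
    apply le_of_sq_le_sq'' (mul_nonneg hX0 (by nlinarith)) (mul_nonneg (by linarith) hY0)
    have key : ((ρ + s) * ‖1 - (starRingEnd ℂ) a * z‖) ^ 2 -
        (‖z - a‖ * (1 + ρ * s)) ^ 2 =
        2 * (1 - ρ ^ 2) * (1 - s ^ 2) * (t + s * ρ) := by
      rw [mul_pow, mul_pow, hX2, hY2]; ring
    have hnn : (0:ℝ) ≤ 2 * (1 - ρ ^ 2) * (1 - s ^ 2) * (t + s * ρ) :=
      mul_nonneg (mul_nonneg (by nlinarith) (by nlinarith)) (by linarith)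
    linarith [key, hnn]
  -- step 2 : (ρ + s) * (1 + r2 r) ≤ (r2 + r) * (1 + ρ s)
  have step2 : (ρ + s) * (1 + r2 * r) ≤ (r2 + r) * (1 + ρ * s) := by
    nlinarith [mul_nonneg (by linarith : (0:ℝ) ≤ r2 - ρ) (by nlinarith : (0:ℝ) ≤ 1 - r * s),
      mul_nonneg (by linarith : (0:ℝ) ≤ r - s) (by nlinarith : (0:ℝ) ≤ 1 - ρ * r2)]
  have hpos : (0:ℝ) < 1 + ρ * s := by nlinarith
  have c1 : ‖z - a‖ * (1 + r2 * r) * (1 + ρ * s) ≤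
      (r2 + r) * ‖1 - (starRingEnd ℂ) a * z‖ * (1 + ρ * s) := by
    calc ‖z - a‖ * (1 + r2 * r) * (1 + ρ * s)
        = (‖z - a‖ * (1 + ρ * s)) * (1 + r2 * r) := by ring
      _ ≤ ((ρ + s) * ‖1 - (starRingEnd ℂ) a * z‖) * (1 + r2 * r) :=
          mul_le_mul_of_nonneg_right step1 (by nlinarith)
      _ = ((ρ + s) * (1 + r2 * r)) * ‖1 - (starRingEnd ℂ) a * z‖ := by ring
      _ ≤ ((r2 + r) * (1 + ρ * s)) * ‖1 - (starRingEnd ℂ) a * z‖ :=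
          mul_le_mul_of_nonneg_right step2 hY0
      _ = (r2 + r) * ‖1 - (starRingEnd ℂ) a * z‖ * (1 + ρ * s) := by ring
  exact le_of_mul_le_mul_right c1 hpos

/-- Maximum modulus / Schwarz-type bound: if `|w - a|·|g w| ≤ M·|1 - ā w|` on the unit
ball and `g` is holomorphic, then `|g| ≤ M` on the unit ball. -/
private lemma schwarz_bound {g : ℂ → ℂ} {a : ℂ} {M : ℝ}
    (hg : DifferentiableOn ℂ g (Metric.ball 0 1))
    (ha : ‖a‖ < 1) (hM : 0 ≤ M)
    (hb : ∀ w ∈ Metric.ball (0:ℂ) 1,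
      ‖w - a‖ * ‖g w‖ ≤ M * ‖1 - (starRingEnd ℂ) a * w‖) :
    ∀ z ∈ Metric.ball (0:ℂ) 1, ‖g z‖ ≤ M := by
  intro z hz
  set s := ‖a‖ with hsdef
  have hs0 : 0 ≤ s := norm_nonneg a
  have hzlt : ‖z‖ < 1 := by
    simpa [Complex.dist_eq] using hz
  have hmax1 : max (‖z‖) s < 1 := max_lt hzlt ha
  have main : ∀ ρ ∈ Ioo (max (‖z‖) s) 1,
      ‖g z‖ ≤ M * ((1 - ρ * s) / (ρ - s)) := by
    rintro ρ ⟨hρl, hρu⟩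
    have hsρ : s < ρ := lt_of_le_of_lt (le_max_right _ _) hρl
    have hzρ : ‖z‖ < ρ := lt_of_le_of_lt (le_max_left _ _) hρl
    have hρ0 : 0 < ρ := lt_of_le_of_lt hs0 hsρ
    have hfr : ∀ w ∈ frontier (Metric.ball (0:ℂ) ρ), ‖g w‖ ≤ M * ((1 - ρ * s) / (ρ - s)) := by
      intro w hw
      rw [frontier_ball (0:ℂ) (ne_of_gt hρ0)] at hw
      have hwρ : ‖w‖ = ρ := by
        simpa [Complex.dist_eq] using hw
      have hw1 : w ∈ Metric.ball (0:ℂ) 1 := by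
        simp only [Metric.mem_ball, Complex.dist_eq, sub_zero]
        rw [hwρ]; exact hρu
      have hgw := hb w hw1
      have hS1 := sphere_ineq hwρ hsρ hρu
      have hYpos : (0:ℝ) < ‖1 - (starRingEnd ℂ) a * w‖ := by
        apply norm_pos_iff.mpr
        apply one_sub_conj_ne
        rw [hwρ]; nlinarith
      rw [← mul_div_assoc, le_div_iff₀ (by linarith : (0:ℝ) < ρ - s)]
      have c1 : ‖g w‖ * (ρ - s) * ‖1 - (starRingEnd ℂ) a * w‖ ≤
          M * (1 - ρ * s) * ‖1 - (starRingEnd ℂ) a * w‖ := by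
        calc ‖g w‖ * (ρ - s) * ‖1 - (starRingEnd ℂ) a * w‖
            = ‖g w‖ * ((ρ - s) * ‖1 - (starRingEnd ℂ) a * w‖) := by ring
          _ ≤ ‖g w‖ * ((1 - ρ * s) * ‖w - a‖) :=
              mul_le_mul_of_nonneg_left hS1 (norm_nonneg _)
          _ = (1 - ρ * s) * (‖w - a‖ * ‖g w‖) := by ring
          _ ≤ (1 - ρ * s) * (M * ‖1 - (starRingEnd ℂ) a * w‖) :=
              mul_le_mul_of_nonneg_left hgw (by nlinarith)
          _ = M * (1 - ρ * s) * ‖1 - (starRingEnd ℂ) a * w‖ := by ring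
      exact le_of_mul_le_mul_right c1 hYpos
    have hdcc : DiffContOnCl ℂ g (Metric.ball (0:ℂ) ρ) := by
      constructor
      · exact hg.mono (Metric.ball_subset_ball hρu.le)
      · apply hg.continuousOn.mono
        rw [closure_ball (0:ℂ) (ne_of_gt hρ0)]
        exact Metric.closedBall_subset_ball hρu
    have hzcl : z ∈ closure (Metric.ball (0:ℂ) ρ) := by
      rw [closure_ball (0:ℂ) (ne_of_gt hρ0)]
      simp only [Metric.mem_closedBall, Complex.dist_eq, sub_zero]
      exact hzρ.le
    have := Complex.norm_le_of_forall_mem_frontier_norm_le Metric.isBounded_ball hdcc hfr hzcl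
    simpa using this
  have hlim : Filter.Tendsto (fun ρ : ℝ => M * ((1 - ρ * s) / (ρ - s)))
      (nhdsWithin 1 (Iio 1)) (nhds M) := by
    have hs1 : s < 1 := ha
    have hc1 : Filter.Tendsto (fun ρ : ℝ => 1 - ρ * s) (nhds (1:ℝ)) (nhds (1 - 1 * s)) :=
      (Filter.tendsto_id.mul_const s).const_sub 1
    have hc2 : Filter.Tendsto (fun ρ : ℝ => ρ - s) (nhds (1:ℝ)) (nhds (1 - s)) :=
      Filter.tendsto_id.sub_const s
    have hc3 := (hc1.div hc2 (by linarith : (1:ℝ) - s ≠ 0)).const_mul M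
    have hval : M * ((1 - 1 * s) / (1 - s)) = M := by
      rw [one_mul, div_self (by linarith : (1:ℝ) - s ≠ 0), mul_one]
    rw [hval] at hc3
    exact hc3.mono_left nhdsWithin_le_nhds
  refine ge_of_tendsto hlim ?_
  filter_upwards [Ioo_mem_nhdsLT_of_mem (⟨hmax1, le_refl 1⟩ : (1:ℝ) ∈ Ioc (max (‖z‖) s) 1)]
    with ρ hρ
  exact main ρ hρ

/-- Iterated derivatives of `f` at `z` from a local factorization `f = (· - z)^m · h`. -/
private lemma factor_iteratedDeriv : ∀ (m : ℕ) (f h : ℂ → ℂ) (z : ℂ), AnalyticAt ℂ h z →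
    (∀ᶠ w in nhds z, f w = (w - z) ^ m * h w) →
    (∀ k < m, iteratedDeriv k f z = 0) ∧
      iteratedDeriv m f z = (m.factorial : ℂ) * h z := by
  intro m
  induction m with
  | zero =>
    intro f h z hh heq
    refine ⟨fun k hk => absurd hk (Nat.not_lt_zero k), ?_⟩
    have := heq.self_of_nhds
    simpa using this
  | succ m ih =>
    intro f h z hh heq
    obtain ⟨sn, hsn, hsub⟩ := hh.eventually_analyticAt.exists_mem
    have hdh : AnalyticAt ℂ (deriv h) z := by
      have hA : AnalyticOnNhd ℂ h sn := fun w hw => hsub w hw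
      exact hA.deriv z (mem_of_mem_nhds hsn)
    have hder : ∀ᶠ w in nhds z, deriv f w =
        (w - z) ^ m * (((m:ℂ) + 1) * h w + (w - z) * deriv h w) := by
      have h1 : deriv f =ᶠ[nhds z] deriv (fun w => (w - z) ^ (m + 1) * h w) :=
        Filter.EventuallyEq.deriv (heq : f =ᶠ[nhds z] fun w => (w - z) ^ (m + 1) * h w)
      filter_upwards [h1, hsn] with w hw hws
      rw [hw]
      have hd1 : HasDerivAt (fun w : ℂ => (w - z) ^ (m + 1))
          ((((m : ℂ) + 1)) * (w - z) ^ m) w := by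
        have := ((hasDerivAt_id w).sub_const z).pow (m + 1)
        simp at this
        exact this
      have hd2 : HasDerivAt h (deriv h w) w := (hsub w hws).differentiableAt.hasDerivAt
      rw [show (fun w => (w - z) ^ (m + 1) * h w) = (fun w => (w - z) ^ (m + 1)) * h from rfl,
        (hd1.mul hd2).deriv]
      ring
    have hh1 : AnalyticAt ℂ (fun w => ((m:ℂ) + 1) * h w + (w - z) * deriv h w) z := by
      apply AnalyticAt.add
      · exact analyticAt_const.mul hh
      · exact ((analyticAt_id.sub analyticAt_const)).mul hdh
    obtain ⟨ih1, ih2⟩ := ih (deriv f) (fun w => ((m:ℂ) + 1) * h w + (w - z) * deriv h w) z hh1 hder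
    constructor
    · intro k hk
      match k with
      | 0 =>
        have := heq.self_of_nhds
        simpa using this
      | Nat.succ k =>
        rw [iteratedDeriv_succ']
        exact ih1 k (by omega)
    · rw [iteratedDeriv_succ', ih2]
      simp only [sub_self, zero_mul, add_zero, Nat.factorial_succ]
      push_cast
      ring

private lemma vanishOrder_eq_of_factor {m : ℕ} {f h : ℂ → ℂ} {z : ℂ} (hh : AnalyticAt ℂ h z)
    (hz : h z ≠ 0) (heq : ∀ᶠ w in nhds z, f w = (w - z) ^ m * h w) : vanishOrder f z = m := by
  obtain ⟨h1, h2⟩ := factor_iteratedDeriv m f h z hh heq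
  have hmem : m ∈ {k : ℕ | iteratedDeriv k f z ≠ 0} := by
    simp only [mem_setOf_eq, h2]
    exact mul_ne_zero (by exact_mod_cast Nat.factorial_ne_zero m) hz
  have hle : vanishOrder f z ≤ m := Nat.sInf_le hmem
  rcases lt_or_ge (vanishOrder f z) m with hlt | hge
  · exfalso
    have hmem' : sInf {k : ℕ | iteratedDeriv k f z ≠ 0} ∈ {k : ℕ | iteratedDeriv k f z ≠ 0} :=
      Nat.sInf_mem ⟨m, hmem⟩
    exact hmem' (h1 _ hlt)
  · omega

private lemma exists_factor {f : ℂ → ℂ} (hf : DifferentiableOn ℂ f (Metric.ball 0 1))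
    (hnz : ∃ z ∈ Metric.ball (0:ℂ) 1, f z ≠ 0) {z : ℂ} (hz : z ∈ Metric.ball (0:ℂ) 1) :
    ∃ h : ℂ → ℂ, AnalyticAt ℂ h z ∧ h z ≠ 0 ∧
      ∀ᶠ w in nhds z, f w = (w - z) ^ (vanishOrder f z) * h w := by
  have hA : AnalyticOnNhd ℂ f (Metric.ball 0 1) := hf.analyticOnNhd Metric.isOpen_ball
  have hAz := hA z hz
  have hne : analyticOrderAt f z ≠ ⊤ := by
    intro htop
    have hev := analyticOrderAt_eq_top.mp htop
    obtain ⟨w, hw, hfw⟩ := hnz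
    exact hfw (hA.eqOn_zero_of_preconnected_of_eventuallyEq_zero
      (convex_ball (0:ℂ) 1).isPreconnected hz hev hw)
  obtain ⟨m, hm⟩ := WithTop.ne_top_iff_exists.mp hne
  obtain ⟨g, hg, hgz, hfg⟩ := hAz.analyticOrderAt_eq_natCast.mp hm.symm
  have heq : ∀ᶠ w in nhds z, f w = (w - z) ^ m * g w := by
    filter_upwards [hfg] with w hw
    rw [hw, smul_eq_mul]
  have hord : vanishOrder f z = m := vanishOrder_eq_of_factor hg hgz heq
  rw [hord]
  exact ⟨g, hg, hgz, heq⟩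

private lemma key (r r2 : ℝ) (h0 : 0 < r) (hrr2 : r < r2) (hr21 : r2 < 1) :
    ∀ (n : ℕ) (f : ℂ → ℂ), DifferentiableOn ℂ f (Metric.ball 0 1) →
      (∃ z ∈ Metric.ball (0:ℂ) 1, f z ≠ 0) →
      ∀ M1 : ℝ, (∀ z ∈ Metric.ball (0:ℂ) 1, ‖f z‖ ≤ M1) →
      ∀ hfin : {z ∈ Metric.closedBall (0:ℂ) r | f z = 0}.Finite,
        n = ∑ z ∈ hfin.toFinset, vanishOrder f z →
      ∀ z ∈ Metric.ball (0:ℂ) r2,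
        ‖f z‖ ≤ M1 * ((r2 + r) / (1 + r2 * r)) ^ n := by
  intro n
  induction n with
  | zero =>
    intro f hf hnz M1 hM1 hfin hsum z hz
    simpa using hM1 z (Metric.ball_subset_ball hr21.le hz)
  | succ n ih =>
    intro f hf hnz M1 hM1 hfin hsum z hz
    have hrlt1 : r < 1 := hrr2.trans hr21
    -- find a zero `a`
    have hne : hfin.toFinset.Nonempty := by
      by_contra hemp
      rw [Finset.not_nonempty_iff_eq_empty] at hemp
      rw [hemp, Finset.sum_empty] at hsum
      omega
    obtain ⟨a, haF⟩ := hne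
    have haset : a ∈ Metric.closedBall (0:ℂ) r ∧ f a = 0 := by
      simpa using hfin.mem_toFinset.mp haF
    obtain ⟨haball, hfa⟩ := haset
    have hsr : ‖a‖ ≤ r := by
      simpa [Complex.dist_eq] using haball
    have ha1 : a ∈ Metric.ball (0:ℂ) 1 := by
      simp only [Metric.mem_ball, Complex.dist_eq, sub_zero]
      linarith
    -- the quotient function g
    set g : ℂ → ℂ := fun w => (1 - (starRingEnd ℂ) a * w) * dslope f a w with hgdef
    have hgd : DifferentiableOn ℂ g (Metric.ball 0 1) := by
      apply DifferentiableOn.mul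
      · exact ((differentiable_const (1:ℂ)).sub
          ((differentiable_const ((starRingEnd ℂ) a)).mul differentiable_id)).differentiableOn
      · exact (Complex.differentiableOn_dslope (Metric.isOpen_ball.mem_nhds ha1)).mpr hf
    have hid : ∀ w, w ≠ a → (w - a) * g w = (1 - (starRingEnd ℂ) a * w) * f w := by
      intro w hw
      have hwa : w - a ≠ 0 := sub_ne_zero.mpr hw
      rw [hgdef]
      simp only
      rw [dslope_of_ne f hw, slope_def_field, hfa, sub_zero]
      field_simp
      try ring
    have hida : ∀ w, (w - a) * g w = (1 - (starRingEnd ℂ) a * w) * f w := by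
      intro w
      rcases eq_or_ne w a with rfl | hw
      · simp [hfa]
      · exact hid w hw
    have hM1nonneg : 0 ≤ M1 := le_trans (norm_nonneg (f 0)) (hM1 0 (by simp))
    have hbnd : ∀ w ∈ Metric.ball (0:ℂ) 1, ‖w - a‖ * ‖g w‖ ≤
        M1 * ‖1 - (starRingEnd ℂ) a * w‖ := by
      intro w hw
      calc ‖w - a‖ * ‖g w‖
          = ‖1 - (starRingEnd ℂ) a * w‖ * ‖f w‖ := by
            rw [← norm_mul, ← norm_mul, hida w]
        _ ≤ ‖1 - (starRingEnd ℂ) a * w‖ * M1 :=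
            mul_le_mul_of_nonneg_left (hM1 w hw) (norm_nonneg _)
        _ = M1 * ‖1 - (starRingEnd ℂ) a * w‖ := mul_comm _ _
    have hgle : ∀ w ∈ Metric.ball (0:ℂ) 1, ‖g w‖ ≤ M1 :=
      schwarz_bound hgd (lt_of_le_of_lt hsr hrlt1) hM1nonneg hbnd
    -- g is not identically zero
    have hgnz : ∃ w ∈ Metric.ball (0:ℂ) 1, g w ≠ 0 := by
      obtain ⟨w, hw1, hwf⟩ := hnz
      have hwa : w ≠ a := fun h => hwf (h ▸ hfa)
      refine ⟨w, hw1, fun hg0 => ?_⟩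
      have hww := hid w hwa
      rw [hg0, mul_zero] at hww
      have habsw : ‖w‖ < 1 := by simpa [Complex.dist_eq] using hw1
      have h1 : (1:ℂ) - (starRingEnd ℂ) a * w ≠ 0 := by
        apply one_sub_conj_ne
        nlinarith [norm_nonneg a, norm_nonneg w]
      rcases mul_eq_zero.mp hww.symm with h | h
      · exact h1 h
      · exact hwf h
    -- zero set of g
    have hsub : {w ∈ Metric.closedBall (0:ℂ) r | g w = 0} ⊆
        {w ∈ Metric.closedBall (0:ℂ) r | f w = 0} := by
      rintro w ⟨hw1, hw2⟩
      refine ⟨hw1, ?_⟩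
      rcases eq_or_ne w a with rfl | hwa
      · exact hfa
      · have hww := hid w hwa
        rw [hw2, mul_zero] at hww
        have habsw : ‖w‖ ≤ r := by simpa [Complex.dist_eq] using hw1
        have h1 : (1:ℂ) - (starRingEnd ℂ) a * w ≠ 0 := by
          apply one_sub_conj_ne
          nlinarith [norm_nonneg a, norm_nonneg w]
        rcases mul_eq_zero.mp hww.symm with h | h
        · exact absurd h h1
        · exact h
    have hfing : {w ∈ Metric.closedBall (0:ℂ) r | g w = 0}.Finite := hfin.subset hsub
    -- order transfer away from a
    have horder : ∀ w ∈ hfin.toFinset, w ≠ a → vanishOrder g w = vanishOrder f w := by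
      intro w hwF hwa
      have hwball : w ∈ Metric.closedBall (0:ℂ) r ∧ f w = 0 := by
        simpa using hfin.mem_toFinset.mp hwF
      have hw1 : w ∈ Metric.ball (0:ℂ) 1 :=
        Metric.closedBall_subset_ball hrlt1 hwball.1
      have habsw : ‖w‖ ≤ r := by simpa [Complex.dist_eq] using hwball.1
      obtain ⟨h, hh, hhz, heq⟩ := exists_factor hf hnz hw1
      have heva : ∀ᶠ w' in nhds w, w' ≠ a := eventually_ne_nhds hwa
      have heq' : ∀ᶠ w' in nhds w, g w' = (w' - w) ^ (vanishOrder f w) *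
          ((1 - (starRingEnd ℂ) a * w') / (w' - a) * h w') := by
        filter_upwards [heq, heva] with w' h1 h2
        have hwa' : w' - a ≠ 0 := sub_ne_zero.mpr h2
        have hgw : g w' = (1 - (starRingEnd ℂ) a * w') * f w' / (w' - a) := by
          rw [eq_div_iff hwa']
          linear_combination hid w' h2
        rw [hgw, h1]
        field_simp
      have hden : AnalyticAt ℂ
          (fun w' => (1 - (starRingEnd ℂ) a * w') / (w' - a) * h w') w := by
        apply AnalyticAt.mul _ hh
        apply AnalyticAt.div
        · exact analyticAt_const.sub (analyticAt_const.mul analyticAt_id)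
        · exact analyticAt_id.sub analyticAt_const
        · exact sub_ne_zero.mpr hwa
      have hval : (1 - (starRingEnd ℂ) a * w) / (w - a) * h w ≠ 0 := by
        apply mul_ne_zero _ hhz
        apply div_ne_zero _ (sub_ne_zero.mpr hwa)
        apply one_sub_conj_ne
        nlinarith [norm_nonneg a, norm_nonneg w]
      exact vanishOrder_eq_of_factor hden hval heq'
    -- order at a
    obtain ⟨h, hh, hhz, heqa⟩ := exists_factor hf hnz ha1
    have hma : ∃ m : ℕ, vanishOrder f a = m + 1 := by
      rcases Nat.eq_zero_or_pos (vanishOrder f a) with h0' | hpos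
      · exfalso
        have := heqa.self_of_nhds
        rw [h0'] at this
        simp only [pow_zero, one_mul] at this
        exact hhz (this ▸ hfa)
      · exact ⟨vanishOrder f a - 1, by omega⟩
    obtain ⟨m, hmaeq⟩ := hma
    have hordera : vanishOrder g a = m := by
      rw [hmaeq] at heqa
      have hcont : ContinuousAt g a :=
        (hgd.differentiableAt (Metric.isOpen_ball.mem_nhds ha1)).continuousAt
      have hRHS : ContinuousAt
          (fun w => (w - a) ^ m * ((1 - (starRingEnd ℂ) a * w) * h w)) a := by
        apply ContinuousAt.mul (by fun_prop)
        exact ContinuousAt.mul (by fun_prop) hh.continuousAt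
      have hpunct : ∀ᶠ w in nhdsWithin a {a}ᶜ,
          g w = (w - a) ^ m * ((1 - (starRingEnd ℂ) a * w) * h w) := by
        filter_upwards [eventually_nhdsWithin_of_eventually_nhds heqa, self_mem_nhdsWithin]
          with w h1 h2
        have hwa : w - a ≠ 0 := sub_ne_zero.mpr h2
        have hgw : g w = (1 - (starRingEnd ℂ) a * w) * f w / (w - a) := by
          rw [eq_div_iff hwa]
          linear_combination hid w h2
        rw [hgw, h1, pow_succ]
        field_simp
      have hata : g a = (a - a) ^ m * ((1 - (starRingEnd ℂ) a * a) * h a) := by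
        have t1 : Filter.Tendsto g (nhdsWithin a {a}ᶜ) (nhds (g a)) :=
          hcont.continuousWithinAt.tendsto
        have t2 : Filter.Tendsto g (nhdsWithin a {a}ᶜ)
            (nhds ((a - a) ^ m * ((1 - (starRingEnd ℂ) a * a) * h a))) := by
          refine Filter.Tendsto.congr' (hpunct.mono fun w hw => hw.symm) ?_
          exact hRHS.continuousWithinAt.tendsto
        exact tendsto_nhds_unique t1 t2
      have heqg : ∀ᶠ w in nhds a,
          g w = (w - a) ^ m * ((1 - (starRingEnd ℂ) a * w) * h w) := by
        rw [eventually_nhdsWithin_iff] at hpunct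
        filter_upwards [hpunct] with w hw
        by_cases hwa : w = a
        · subst hwa; exact hata
        · exact hw hwa
      have hden : AnalyticAt ℂ (fun w => (1 - (starRingEnd ℂ) a * w) * h w) a := by
        exact (analyticAt_const.sub (analyticAt_const.mul analyticAt_id)).mul hh
      have hval : (1 - (starRingEnd ℂ) a * a) * h a ≠ 0 := by
        apply mul_ne_zero _ hhz
        apply one_sub_conj_ne
        nlinarith [norm_nonneg a]
      exact vanishOrder_eq_of_factor hden hval heqg
    -- sum bookkeeping
    have hsum_g : n = ∑ w ∈ hfing.toFinset, vanishOrder g w := by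
      have hsubF : hfing.toFinset ⊆ hfin.toFinset := by
        intro w hw
        rw [Set.Finite.mem_toFinset] at *
        exact hsub hw
      have e1 : ∑ w ∈ hfing.toFinset, vanishOrder g w =
          ∑ w ∈ hfin.toFinset, vanishOrder g w := by
        apply Finset.sum_subset hsubF
        intro w hwF hwnF
        have hwb : w ∈ Metric.closedBall (0:ℂ) r ∧ f w = 0 := by
          simpa using hfin.mem_toFinset.mp hwF
        have hnotin : ¬ (w ∈ Metric.closedBall (0:ℂ) r ∧ g w = 0) := by
          intro hcon
          exact hwnF (hfing.mem_toFinset.mpr hcon)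
        have hgw : g w ≠ 0 := fun hcon => hnotin ⟨hwb.1, hcon⟩
        apply Nat.sInf_eq_zero.mpr
        left
        simpa using hgw
      have e2 : vanishOrder g a + ∑ w ∈ hfin.toFinset.erase a, vanishOrder g w =
          ∑ w ∈ hfin.toFinset, vanishOrder g w := Finset.add_sum_erase _ _ haF
      have e3 : vanishOrder f a + ∑ w ∈ hfin.toFinset.erase a, vanishOrder f w =
          ∑ w ∈ hfin.toFinset, vanishOrder f w := Finset.add_sum_erase _ _ haF
      have e4 : ∑ w ∈ hfin.toFinset.erase a, vanishOrder g w =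
          ∑ w ∈ hfin.toFinset.erase a, vanishOrder f w := by
        apply Finset.sum_congr rfl
        intro w hw
        exact horder w (Finset.mem_of_mem_erase hw) (Finset.ne_of_mem_erase hw)
      rw [e1, ← e2, e4, hordera]
      rw [← e3, hmaeq] at hsum
      omega
    -- apply IH to g
    have hIH := ih g hgd hgnz M1 hgle hfing hsum_g z hz
    -- combine
    have hz2 : ‖z‖ ≤ r2 := by
      have : ‖z‖ < r2 := by simpa [Complex.dist_eq] using hz
      linarith
    have hz1 : z ∈ Metric.ball (0:ℂ) 1 := Metric.ball_subset_ball hr21.le hz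
    have hbl := blaschke_ineq h0.le hrr2 hr21 hsr hz2
    have hYpos : (0:ℝ) < ‖1 - (starRingEnd ℂ) a * z‖ := by
      apply norm_pos_iff.mpr
      apply one_sub_conj_ne
      nlinarith [norm_nonneg a, norm_nonneg z]
    have hfz : ‖f z‖ * ‖1 - (starRingEnd ℂ) a * z‖ =
        ‖z - a‖ * ‖g z‖ := by
      rw [← norm_mul, ← norm_mul, hida z, mul_comm]
    have hden_pos : (0:ℝ) < 1 + r2 * r := by nlinarith
    have h1 : ‖f z‖ * (1 + r2 * r) ≤ (r2 + r) * ‖g z‖ := by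
      have c1 : ‖f z‖ * (1 + r2 * r) * ‖1 - (starRingEnd ℂ) a * z‖ ≤
          (r2 + r) * ‖g z‖ * ‖1 - (starRingEnd ℂ) a * z‖ := by
        calc ‖f z‖ * (1 + r2 * r) * ‖1 - (starRingEnd ℂ) a * z‖
            = (‖f z‖ * ‖1 - (starRingEnd ℂ) a * z‖) * (1 + r2 * r) := by
              ring
          _ = (‖z - a‖ * ‖g z‖) * (1 + r2 * r) := by rw [hfz]
          _ = (‖z - a‖ * (1 + r2 * r)) * ‖g z‖ := by ring
          _ ≤ ((r2 + r) * ‖1 - (starRingEnd ℂ) a * z‖) * ‖g z‖ :=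
              mul_le_mul_of_nonneg_right hbl (norm_nonneg _)
          _ = (r2 + r) * ‖g z‖ * ‖1 - (starRingEnd ℂ) a * z‖ := by ring
      exact le_of_mul_le_mul_right c1 hYpos
    have h2 : ‖f z‖ ≤ (r2 + r) / (1 + r2 * r) * ‖g z‖ := by
      rw [div_mul_eq_mul_div, le_div_iff₀ hden_pos]
      linarith
    calc ‖f z‖ ≤ (r2 + r) / (1 + r2 * r) * ‖g z‖ := h2
      _ ≤ (r2 + r) / (1 + r2 * r) * (M1 * ((r2 + r) / (1 + r2 * r)) ^ n) := by
          exact mul_le_mul_of_nonneg_left hIH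
            (div_nonneg (by linarith) (by nlinarith))
      _ = M1 * ((r2 + r) / (1 + r2 * r)) ^ (n + 1) := by ring

/-- If `f` is bounded and holomorphic on the open unit disk, not
identically zero, and has `n` zeros (with multiplicity) in the closed disk of
radius `r < r2 < 1`, then `M_f(r2) ≤ M_f(1) · ((r2 + r)/(1 + r2·r))^n`. -/
theorem stmt9 (f : ℂ → ℂ) (hf : DifferentiableOn ℂ f (Metric.ball 0 1))
    (hnz : ∃ z ∈ Metric.ball (0 : ℂ) 1, f z ≠ 0)
    (r r2 : ℝ) (h0 : 0 < r) (hrr2 : r < r2) (hr21 : r2 < 1)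
    (M1 M2 : ℝ)
    (hM1 : IsLUB ((fun z => ‖f z‖) '' Metric.ball (0 : ℂ) 1) M1)
    (hM2 : IsLUB ((fun z => ‖f z‖) '' Metric.ball (0 : ℂ) r2) M2)
    (hfin : {z ∈ Metric.closedBall (0 : ℂ) r | f z = 0}.Finite)
    (n : ℕ) (hn : n = ∑ z ∈ hfin.toFinset, vanishOrder f z) :
    M2 ≤ M1 * ((r2 + r) / (1 + r2 * r)) ^ n := by
  have hM1ub : ∀ z ∈ Metric.ball (0:ℂ) 1, ‖f z‖ ≤ M1 := by
    intro z hz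
    exact hM1.1 ⟨z, hz, rfl⟩
  have hkey := key r r2 h0 hrr2 hr21 n f hf hnz M1 hM1ub hfin hn
  apply hM2.2
  rintro y ⟨z, hz, rfl⟩
  exact hkey z hz
end

section
/- Let θ0 > 0 and K0 > 2. Let κ : ℝ → ℝ be an even, convex, differentiable function with κ(0) = 0 and κ(θ) > 0 for all θ > θ0, satisfying K0·κ(θ) ≤ κ(2θ) for all θ > θ0, and write μ = κ'. Then there exist θ0' > 0 and m0 ∈ ℕ such that for every θ1 > θ0' there exists θ* ∈ [θ1, 2^{m0−1}·θ1] with μ(2θ*) − μ(θ*) > 1. -/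
open Set Filter

private theorem stmt12_choose_n (r : ℝ) (hr : 1 < r) (c B A : ℝ) (hA : 0 < A) :
    ∃ n : ℕ, (n : ℝ) + c < A * r ^ n ∧ B ≤ A * r ^ n := by
  have h1 : Tendsto (fun n : ℕ => (n : ℝ) ^ 1 * (1 / r) ^ n) atTop (nhds 0) :=
    (summable_pow_mul_geometric_of_norm_lt_one (R := ℝ) (r := 1 / r) 1
      (by rw [Real.norm_eq_abs, abs_of_pos (by positivity)]
          rw [div_lt_one (by positivity)]; linarith)).tendsto_atTop_zero
  have h2 : Tendsto (fun n : ℕ => r ^ n) atTop atTop :=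
    tendsto_pow_atTop_atTop_of_one_lt hr
  have h3 := h1.eventually (eventually_lt_nhds (show (0:ℝ) < A / 2 by positivity))
  have h4 := h2.eventually_ge_atTop ((max c 0 + max B 0 + 2) * 2 / A)
  obtain ⟨n, hn3, hn4⟩ := (h3.and h4).exists
  simp only [pow_one, one_div, inv_pow] at hn3
  have hrn : (0:ℝ) < r ^ n := by positivity
  have hn3' : (n : ℝ) < A / 2 * r ^ n := by
    have := mul_lt_mul_of_pos_right hn3 hrn
    rwa [mul_assoc, inv_mul_cancel₀ (ne_of_gt hrn), mul_one] at this
  have hn4' : max c 0 + max B 0 + 2 ≤ A / 2 * r ^ n := by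
    rw [div_le_iff₀ hA] at hn4; nlinarith
  have hc : c ≤ max c 0 := le_max_left _ _
  have hB : B ≤ max B 0 := le_max_left _ _
  have hB0 : 0 ≤ max B 0 := le_max_right _ _
  have hc0 : 0 ≤ max c 0 := le_max_right _ _
  refine ⟨n, by nlinarith, by nlinarith⟩

/-- If `κ` is even, convex, differentiable, `κ(0) = 0`,
`κ > 0` beyond `θ0`, and `K0 κ(θ) ≤ κ(2θ)` for `θ > θ0` with `K0 > 2`, then
there exist `θ0' > 0` and `m0 ∈ ℕ` such that every `θ1 > θ0'` admits
`θ* ∈ [θ1, 2^{m0-1} θ1]` with `μ(2θ*) - μ(θ*) > 1`, where `μ = κ'`. -/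
theorem stmt12 (θ0 K0 : ℝ) (hθ0 : 0 < θ0) (hK0 : 2 < K0)
    (κ : ℝ → ℝ) (heven : ∀ θ : ℝ, κ (-θ) = κ θ)
    (hconv : ConvexOn ℝ Set.univ κ) (hdiff : Differentiable ℝ κ)
    (h0 : κ 0 = 0) (hpos : ∀ θ : ℝ, θ0 < θ → 0 < κ θ)
    (hgrow : ∀ θ : ℝ, θ0 < θ → K0 * κ θ ≤ κ (2 * θ)) :
    ∃ (θ0' : ℝ) (m0 : ℕ), 0 < θ0' ∧
      ∀ θ1 : ℝ, θ0' < θ1 →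
        ∃ θs ∈ Set.Icc θ1 ((2 : ℝ) ^ (m0 - 1) * θ1),
          1 < deriv κ (2 * θs) - deriv κ θs := by
  have hle_slope : ∀ x y : ℝ, x < y → deriv κ x ≤ (κ y - κ x) / (y - x) := fun x y hxy => by
    have := hconv.deriv_le_slope (mem_univ x) (mem_univ y) hxy (hdiff x)
    rwa [slope_def_field] at this
  have hslope_le : ∀ x y : ℝ, x < y → (κ y - κ x) / (y - x) ≤ deriv κ y := fun x y hxy => by
    have := hconv.slope_le_deriv (mem_univ x) (mem_univ y) hxy (hdiff y)
    rwa [slope_def_field] at this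
  -- iterated growth
  have hgrow' : ∀ (n : ℕ) (θ : ℝ), θ0 < θ → K0 ^ n * κ θ ≤ κ (2 ^ n * θ) := by
    intro n
    induction n with
    | zero => intro θ hθ; simp
    | succ n ih =>
      intro θ hθ
      have hθpos : 0 < θ := hθ0.trans hθ
      have h2 : θ0 < 2 ^ n * θ :=
        lt_of_lt_of_le hθ (le_mul_of_one_le_left hθpos.le (one_le_pow₀ (by norm_num)))
      calc K0 ^ (n+1) * κ θ = K0 * (K0 ^ n * κ θ) := by ring
        _ ≤ K0 * κ (2 ^ n * θ) := mul_le_mul_of_nonneg_left (ih θ hθ) (by linarith)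
        _ ≤ κ (2 * (2 ^ n * θ)) := hgrow _ h2
        _ = κ (2 ^ (n+1) * θ) := by rw [show (2:ℝ) * (2 ^ n * θ) = 2 ^ (n+1) * θ by ring]
  set c : ℝ := κ (4 * θ0) / (2 * θ0) with hc_def
  have h4θ0 : θ0 < 4 * θ0 := by linarith
  have hcpos : 0 < c := div_pos (hpos _ h4θ0) (by linarith)
  obtain ⟨n0, hn0, hn0'⟩ := stmt12_choose_n (K0/2) (by linarith) (2 + c) (2 * c)
      (c * (K0 - 1) / 2) (by nlinarith [mul_pos hcpos (show (0:ℝ) < K0 - 1 by linarith)])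
  refine ⟨2 * θ0, n0 + 2, by linarith, ?_⟩
  intro θ1 hθ1
  have hθ1pos : 0 < θ1 := by linarith
  by_contra hcon
  push_neg at hcon
  have hidx : n0 + 2 - 1 = n0 + 1 := by omega
  rw [hidx] at hcon
  -- telescoping
  have htel : ∀ j : ℕ, j ≤ n0 + 2 → deriv κ (2 ^ j * θ1) ≤ deriv κ θ1 + j := by
    intro j
    induction j with
    | zero => intro _; simp
    | succ j ih =>
      intro hj
      have h1 := ih (by omega)
      have hmem : (2:ℝ) ^ j * θ1 ∈ Icc θ1 ((2:ℝ) ^ (n0 + 1) * θ1) := by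
        constructor
        · exact le_mul_of_one_le_left hθ1pos.le (one_le_pow₀ (by norm_num))
        · exact mul_le_mul_of_nonneg_right
            (pow_le_pow_right₀ (by norm_num) (by omega)) hθ1pos.le
      have h2 := hcon _ hmem
      rw [show (2:ℝ) ^ (j+1) * θ1 = 2 * ((2:ℝ) ^ j * θ1) by ring]
      push_cast
      linarith
  have hψ : θ0 < 2 * θ1 := by linarith
  -- κ(2θ1) ≥ c θ1
  have hkc : c * θ1 ≤ κ (2 * θ1) := by
    have hd : κ (4*θ0) / (4*θ0) ≤ deriv κ (4*θ0) := by
      have h := hslope_le 0 (4*θ0) (by linarith)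
      simpa [h0] using h
    have h2 : deriv κ (4*θ0) ≤ (κ (2*θ1) - κ (4*θ0)) / (2*θ1 - 4*θ0) :=
      hle_slope _ _ (by linarith)
    have hgap : (0:ℝ) < 2*θ1 - 4*θ0 := by linarith
    have h3 := (le_div_iff₀ hgap).mp (hd.trans h2)
    have heq : c * θ1 = κ (4*θ0) + κ (4*θ0) / (4*θ0) * (2*θ1 - 4*θ0) := by
      rw [hc_def]; field_simp; ring
    linarith
  set Q : ℝ := κ (2*θ1) / θ1 with hQ
  have hQc : c ≤ Q := by rw [hQ, le_div_iff₀ hθ1pos]; linarith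
  -- upper bound for deriv at θ1
  have hup : deriv κ θ1 ≤ Q := by
    have h := hle_slope θ1 (2*θ1) (by linarith)
    rw [show (2*θ1 - θ1 : ℝ) = θ1 by ring] at h
    have hκ1 : 0 < κ θ1 := hpos θ1 (by linarith)
    have h2 : (κ (2*θ1) - κ θ1)/θ1 ≤ Q := by
      rw [hQ]; exact div_le_div_of_nonneg_right (by linarith) hθ1pos.le -- may need fix
    linarith
  -- lower bound for deriv at 2^(n0+2) θ1
  set a : ℝ := (K0-1)/2 * (K0/2) ^ n0 with ha
  have hlow : a * Q ≤ deriv κ ((2:ℝ) ^ (n0+2) * θ1) := by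
    have hxpos : (0:ℝ) < 2 ^ n0 * (2 * θ1) := by positivity
    have hxθ0 : θ0 < 2 ^ n0 * (2 * θ1) :=
      lt_of_lt_of_le hψ (le_mul_of_one_le_left (by linarith) (one_le_pow₀ (by norm_num)))
    have h := hslope_le (2 ^ n0 * (2 * θ1)) (2 * (2 ^ n0 * (2 * θ1))) (by linarith)
    rw [show 2 * ((2:ℝ) ^ n0 * (2 * θ1)) - 2 ^ n0 * (2 * θ1) = 2 ^ n0 * (2 * θ1) by ring] at h
    have hg1 : K0 * κ (2 ^ n0 * (2 * θ1)) ≤ κ (2 * (2 ^ n0 * (2 * θ1))) := hgrow _ hxθ0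
    have hg2 : K0 ^ n0 * κ (2*θ1) ≤ κ (2 ^ n0 * (2 * θ1)) := hgrow' n0 (2*θ1) hψ
    have hκx : 0 < κ (2 ^ n0 * (2 * θ1)) := hpos _ hxθ0
    have key : (K0 - 1) * (K0 ^ n0 * κ (2*θ1)) ≤
        κ (2 * (2 ^ n0 * (2 * θ1))) - κ (2 ^ n0 * (2 * θ1)) := by
      nlinarith [mul_le_mul_of_nonneg_left hg2 (by linarith : (0:ℝ) ≤ K0 - 1)]
    have h2 : (K0 - 1) * (K0 ^ n0 * κ (2*θ1)) / (2 ^ n0 * (2 * θ1)) ≤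
        deriv κ (2 * (2 ^ n0 * (2 * θ1))) :=
      le_trans (div_le_div_of_nonneg_right key hxpos.le) h
    have heq : a * Q = (K0 - 1) * (K0 ^ n0 * κ (2*θ1)) / (2 ^ n0 * (2 * θ1)) := by
      rw [ha, hQ, div_pow]
      field_simp
    rw [show (2:ℝ) ^ (n0+2) * θ1 = 2 * (2 ^ n0 * (2 * θ1)) by ring]
    rw [heq]
    exact h2
  -- combine
  have htel' := htel (n0+2) le_rfl
  have hmain : a * Q ≤ Q + ((n0:ℝ)+2) := by push_cast at htel'; linarith
  have hca : c * (K0-1) / 2 * (K0/2) ^ n0 = c * a := by rw [ha]; ring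
  rw [hca] at hn0 hn0'
  have ha2 : 2 ≤ a := (mul_le_mul_iff_right₀ hcpos).mp (by linarith)
  have hQa : c * (a - 1) ≤ Q * (a - 1) := mul_le_mul_of_nonneg_right hQc (by linarith)
  nlinarith
end
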